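/- (Proposition) Let K be a field of characteristic zero and let f_{m,n} ∈ K (m, n ≥ 0) with f_{0,0} = 0 and f_{0,1} ≠ 0. Let φ_n = Σ_{m≥0} f_{m,n} x^m/m! ∈ K[[x]], g = Σ_{n≥1} φ_n Y^n/n! ∈ K[[x]][[Y]], ḡ its compositional inverse, ḡ_k = k!·[Y^k]ḡ ∈ K[[x]], and a_{k,j} = j!·[x^j]ḡ_k ∈ K. Let y = Σ_{m≥1} y_m x^m/m! be the unique power series with zero constant term such that F(x, y(x)) = 0, where F = Σ_{m,n≥0} f_{m,n} x^m y^n/(m! n!). Then for every m ≥ 1, y_m = Σ_{n=1}^{m} C(m,n) · Σ_{k=1}^{n} (−1)^k · a_{k,m−n} · B_{n,k}(f_{1,0}, …, f_{n−k+1,0}), where C(m,n) is the binomial coefficient. -/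

import Mathlib

open PowerSeries

/-- First entry of a tuple (`0` if the tuple is empty). -/
def firstEntry {k : ℕ} (r : Fin k → ℕ) : ℕ := if h : 0 < k then r ⟨0, h⟩ else 0

/-- The partial Bell polynomial `B_{n,k}` evaluated at `x 1, x 2, …, x (n-k+1)` over a
`ℚ`-algebra; it vanishes when `n < k`. -/
noncomputable def bellPoly {R : Type*} [CommRing R] [Algebra ℚ R] (n k : ℕ) (x : ℕ → R) : R :=
  ∑ r ∈ Finset.filter
      (fun r : Fin n → ℕ => (∑ i, r i) = k ∧ (∑ i, (i.1 + 1) * r i) = n)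
      (Fintype.piFinset fun _ : Fin n => Finset.range (n + 1)),
    algebraMap ℚ R ((n.factorial : ℚ) /
        ∏ i : Fin n, ((r i).factorial * ((i.1 + 1).factorial : ℚ) ^ (r i))) *
      ∏ i : Fin n, x (i.1 + 1) ^ (r i)

/-- Composition `g ∘ h` of formal power series (the usual substitution of `h` into `g`,
intended for `h` with zero constant term). -/
noncomputable def psComp {R : Type*} [CommSemiring R] (g h : PowerSeries R) : PowerSeries R :=
  PowerSeries.mk fun n => ∑ k ∈ Finset.range (n + 1),
    PowerSeries.coeff k g * PowerSeries.coeff n (h ^ k)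

/-- Evaluation of `G ∈ K[[x]][[Y]]` at `a ∈ K[[x]]` (the usual substitution, intended for `a`
with zero constant term). -/
noncomputable def psEval {K : Type*} [CommSemiring K] (G : PowerSeries (PowerSeries K))
    (a : PowerSeries K) : PowerSeries K :=
  PowerSeries.mk fun N => ∑ k ∈ Finset.range (N + 1),
    PowerSeries.coeff N (PowerSeries.coeff k G * a ^ k)

/-- Substituting `y ∈ K[[x]]` for the second variable of `F ∈ K[[x,y]]` (the usual
substitution of multivariate power series, intended for `y` with zero constant term). -/
noncomputable def substY {K : Type*} [CommSemiring K] (F : MvPowerSeries (Fin 2) K)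
    (y : PowerSeries K) : PowerSeries K :=
  PowerSeries.mk fun N => ∑ m ∈ Finset.range (N + 1), ∑ n ∈ Finset.range (N + 1),
    MvPowerSeries.coeff (Finsupp.single 0 m + Finsupp.single 1 n) F *
      PowerSeries.coeff (N - m) (y ^ n)

/-- `F = Σ_{m,n} f_{m,n} x^m y^n/(m! n!) ∈ K[[x,y]]`. -/
noncomputable def Fser {K : Type*} [Field K] (f : ℕ → ℕ → K) : MvPowerSeries (Fin 2) K :=
  fun s => (((s 0).factorial : K) * ((s 1).factorial : K))⁻¹ * f (s 0) (s 1)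

/-- `φ_n = Σ_{m≥0} f_{m,n} x^m/m! ∈ K[[x]]`. -/
noncomputable def phiSer {K : Type*} [Field K] (f : ℕ → ℕ → K) (n : ℕ) : PowerSeries K :=
  PowerSeries.mk fun m => ((m.factorial : K))⁻¹ * f m n

/-- `g = Σ_{n≥1} φ_n Y^n/n! ∈ K[[x]][[Y]]`. -/
noncomputable def gSer {K : Type*} [Field K] (f : ℕ → ℕ → K) : PowerSeries (PowerSeries K) :=
  PowerSeries.mk fun n => if n = 0 then 0 else
    PowerSeries.C ((n.factorial : K))⁻¹ * phiSer f n


open scoped Classical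
open Finset

section Aux
variable {K : Type*} [CommSemiring K]

lemma coeff_pow_of_lt {w : PowerSeries K} (hw : constantCoeff w = 0) :
    ∀ {k j : ℕ}, j < k → coeff j (w ^ k) = 0 := by
  intro k
  induction k with
  | zero => intro j hj; omega
  | succ k ih =>
    intro j hj
    rw [pow_succ, coeff_mul]
    refine Finset.sum_eq_zero fun p hp => ?_
    rw [Finset.HasAntidiagonal.mem_antidiagonal] at hp
    rcases Nat.eq_zero_or_pos p.2 with h2 | h2
    · have : p.1 = j := by omega
      subst this
      rw [h2, coeff_zero_eq_constantCoeff, hw, mul_zero]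
    · have : p.1 < k := by omega
      rw [ih this, zero_mul]

lemma coeff_mul_pow_of_lt {c w : PowerSeries K} (hw : constantCoeff w = 0) {N k : ℕ}
    (h : N < k) : coeff N (c * w ^ k) = 0 := by
  rw [coeff_mul]
  refine Finset.sum_eq_zero fun p hp => ?_
  rw [Finset.HasAntidiagonal.mem_antidiagonal] at hp
  rw [coeff_pow_of_lt hw (by omega : p.2 < k), mul_zero]

lemma coeff_mul_congr {a b : PowerSeries K} {n : ℕ}
    (h : ∀ i ≤ n, coeff i a = coeff i b) (c : PowerSeries K) :
    coeff n (c * a) = coeff n (c * b) := by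
  rw [coeff_mul, coeff_mul]
  refine Finset.sum_congr rfl fun p hp => ?_
  rw [Finset.HasAntidiagonal.mem_antidiagonal] at hp
  rw [h p.2 (by omega)]

lemma coeff_pow_congr {u v : PowerSeries K} {n : ℕ}
    (h : ∀ i ≤ n, coeff i u = coeff i v) (k : ℕ) :
    ∀ i ≤ n, coeff i (u ^ k) = coeff i (v ^ k) := by
  induction k with
  | zero => intro i _; rfl
  | succ k ih =>
    intro i hi
    rw [pow_succ, pow_succ, coeff_mul, coeff_mul]
    refine Finset.sum_congr rfl fun p hp => ?_
    rw [Finset.HasAntidiagonal.mem_antidiagonal] at hp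
    rw [ih p.1 (by omega), h p.2 (by omega)]

lemma coeff_psEval (G : PowerSeries (PowerSeries K)) {w : PowerSeries K}
    (hw : constantCoeff w = 0) {N M : ℕ} (hNM : N < M) :
    coeff N (psEval G w) =
      ∑ k ∈ Finset.range M, coeff N (coeff k G * w ^ k) := by
  rw [psEval, coeff_mk]
  refine Finset.sum_subset (Finset.range_subset_range.2 hNM) fun k hk hk' => ?_
  rw [Finset.mem_range] at hk hk'
  exact coeff_mul_pow_of_lt hw (by omega)

lemma psEval_one {w : PowerSeries K} : psEval 1 w = 1 := by
  ext N
  rw [psEval, coeff_mk]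
  rw [Finset.sum_eq_single_of_mem 0 (Finset.mem_range.2 (by omega))]
  · simp
  · intro k hk hk0
    rw [PowerSeries.coeff_one, if_neg hk0, zero_mul, map_zero]

lemma psEval_mul (A B : PowerSeries (PowerSeries K)) {w : PowerSeries K}
    (hw : constantCoeff w = 0) : psEval (A * B) w = psEval A w * psEval B w := by
  ext N
  have key : ∀ p q : ℕ, N < p + q →
      coeff N (coeff p A * coeff q B * w ^ (p + q)) = 0 :=
    fun p q h => coeff_mul_pow_of_lt hw h
  -- RHS
  have hR : coeff N (psEval A w * psEval B w)
      = ∑ p ∈ Finset.range (N + 1), ∑ q ∈ Finset.range (N + 1),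
          coeff N (coeff p A * coeff q B * w ^ (p + q)) := by
    rw [coeff_mul]
    have : ∀ pq ∈ Finset.HasAntidiagonal.antidiagonal N,
        (coeff pq.1 (psEval A w)) * (coeff pq.2 (psEval B w))
          = ∑ p ∈ Finset.range (N + 1), ∑ q ∈ Finset.range (N + 1),
              (coeff pq.1 (coeff p A * w ^ p)) *
              (coeff pq.2 (coeff q B * w ^ q)) := by
      intro pq hpq
      rw [Finset.HasAntidiagonal.mem_antidiagonal] at hpq
      rw [coeff_psEval A hw (by omega : pq.1 < N + 1),
        coeff_psEval B hw (by omega : pq.2 < N + 1), Finset.sum_mul_sum]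
    rw [Finset.sum_congr rfl this, Finset.sum_comm]
    refine Finset.sum_congr rfl fun p _ => ?_
    rw [Finset.sum_comm]
    refine Finset.sum_congr rfl fun q _ => ?_
    rw [← coeff_mul]
    ring_nf
  rw [hR]
  -- LHS
  rw [coeff_psEval (A * B) hw (Nat.lt_succ_self N)]
  have hL : ∀ k ∈ Finset.range (N + 1),
      coeff N (coeff k (A * B) * w ^ k)
        = ∑ pq ∈ Finset.HasAntidiagonal.antidiagonal k,
            coeff N (coeff pq.1 A * coeff pq.2 B * w ^ (pq.1 + pq.2)) := by
    intro k hk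
    rw [PowerSeries.coeff_mul k A B, Finset.sum_mul, map_sum]
    refine Finset.sum_congr rfl fun pq hpq => ?_
    rw [Finset.HasAntidiagonal.mem_antidiagonal] at hpq
    rw [hpq]
  rw [Finset.sum_congr rfl hL]
  -- triangle = square
  rw [Finset.sum_sigma', ← Finset.sum_product',
    ← Finset.sum_filter_add_sum_filter_not (Finset.range (N + 1) ×ˢ Finset.range (N + 1))
      (fun x => x.1 + x.2 ≤ N)]
  have h2 : ∑ x ∈ (Finset.range (N + 1) ×ˢ Finset.range (N + 1)).filter
      (fun x => ¬ x.1 + x.2 ≤ N),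
      coeff N (coeff x.1 A * coeff x.2 B * w ^ (x.1 + x.2)) = 0 := by
    refine Finset.sum_eq_zero fun x hx => ?_
    rw [Finset.mem_filter] at hx
    exact key x.1 x.2 (by omega)
  rw [h2, add_zero]
  refine Finset.sum_nbij' (fun x => (x.2.1, x.2.2)) (fun x => ⟨x.1 + x.2, (x.1, x.2)⟩)
    ?_ ?_ ?_ ?_ ?_
  · rintro ⟨k, p, q⟩ hx
    simp only [Finset.mem_sigma, Finset.mem_range, Finset.HasAntidiagonal.mem_antidiagonal] at hx
    simp only [Finset.mem_filter, Finset.mem_product, Finset.mem_range]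
    omega
  · rintro ⟨p, q⟩ hx
    simp only [Finset.mem_filter, Finset.mem_product, Finset.mem_range] at hx
    simp only [Finset.mem_sigma, Finset.mem_range, Finset.HasAntidiagonal.mem_antidiagonal]
    exact ⟨by omega, trivial⟩
  · rintro ⟨k, p, q⟩ hx
    simp only [Finset.mem_sigma, Finset.mem_range, Finset.HasAntidiagonal.mem_antidiagonal] at hx
    simp [hx.2]
  · rintro ⟨p, q⟩ _; rfl
  · rintro ⟨k, p, q⟩ _; rfl

lemma psEval_pow (A : PowerSeries (PowerSeries K)) {w : PowerSeries K}
    (hw : constantCoeff w = 0) (k : ℕ) : psEval (A ^ k) w = (psEval A w) ^ k := by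
  induction k with
  | zero => rw [pow_zero, pow_zero, psEval_one]
  | succ k ih => rw [pow_succ, pow_succ, psEval_mul _ _ hw, ih]

lemma psEval_X {w : PowerSeries K} (hw : constantCoeff w = 0) : psEval X w = w := by
  ext N
  rw [psEval, coeff_mk]
  rcases Nat.eq_zero_or_pos N with hN | hN
  · subst hN
    simp only [zero_add, Finset.range_one, Finset.sum_singleton, pow_zero, mul_one]
    rw [PowerSeries.coeff_zero_X, map_zero, coeff_zero_eq_constantCoeff, hw]
  · rw [Finset.sum_eq_single_of_mem 1 (Finset.mem_range.2 (by omega))]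
    · rw [PowerSeries.coeff_one_X, one_mul, pow_one]
    · intro k hk hk1
      rw [PowerSeries.coeff_X, if_neg hk1, zero_mul, map_zero]

lemma constantCoeff_psEval (G : PowerSeries (PowerSeries K)) (w : PowerSeries K)
    (hG : coeff 0 G = 0) : constantCoeff (psEval G w) = 0 := by
  rw [← coeff_zero_eq_constantCoeff_apply, psEval, coeff_mk]
  simp only [zero_add, Finset.range_one, Finset.sum_singleton, hG, zero_mul, map_zero]

lemma psEval_psComp (G H : PowerSeries (PowerSeries K)) {w : PowerSeries K}
    (hH : PowerSeries.constantCoeff H = 0) (hw : constantCoeff w = 0) :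
    psEval (psComp G H) w = psEval G (psEval H w) := by
  ext N
  set u := psEval H w with hu
  rw [coeff_psEval (psComp G H) hw (Nat.lt_succ_self N),
    coeff_psEval G (constantCoeff_psEval H w
      (by rw [coeff_zero_eq_constantCoeff_apply]; exact hH)) (Nat.lt_succ_self N)]
  have hcomp : ∀ j ∈ Finset.range (N + 1),
      coeff N (coeff j (psComp G H) * w ^ j)
        = ∑ k ∈ Finset.range (N + 1),
            coeff N (coeff k G * coeff j (H ^ k) * w ^ j) := by
    intro j hj
    rw [Finset.mem_range] at hj
    rw [psComp, coeff_mk]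
    rw [Finset.sum_subset (Finset.range_subset_range.2 (by omega : j + 1 ≤ N + 1))]
    · rw [Finset.sum_mul, map_sum]
    · intro k hk hk'
      rw [Finset.mem_range] at hk hk'
      rw [coeff_pow_of_lt hH (by omega : j < k), mul_zero]
  rw [Finset.sum_congr rfl hcomp, Finset.sum_comm]
  refine Finset.sum_congr rfl fun k hk => ?_
  rw [Finset.mem_range] at hk
  have h1 : ∀ j, coeff k G * coeff j (H ^ k) * w ^ j
      = coeff k G * (coeff j (H ^ k) * w ^ j) := fun j => by ring
  simp only [h1]
  rw [← map_sum, ← Finset.mul_sum]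
  refine (coeff_mul_congr (fun i hi => ?_) _).symm
  rw [← psEval_pow H hw, coeff_psEval (H ^ k) hw (by omega : i < N + 1), map_sum]

end Aux

lemma bellPoly_eq_zero {R : Type*} [CommRing R] [Algebra ℚ R] {n k : ℕ} (h : n < k)
    (x : ℕ → R) : bellPoly n k x = 0 := by
  rw [bellPoly, Finset.filter_false_of_mem, Finset.sum_empty]
  rintro r - ⟨h1, h2⟩
  have : (∑ i, r i) ≤ ∑ i : Fin n, (i.1 + 1) * r i :=
    Finset.sum_le_sum fun i _ => Nat.le_mul_of_pos_left _ (by omega)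
  omega

lemma sum_Icc_one {M : Type*} [AddCommMonoid M] (n : ℕ) (g : ℕ → M) :
    ∑ j ∈ Finset.Icc 1 n, g j = ∑ i : Fin n, g (i.1 + 1) := by
  rw [← Finset.Ico_add_one_right_eq_Icc, Finset.sum_Ico_eq_sum_range, Fin.sum_univ_eq_sum_range
    (fun i => g (i + 1))]
  simp [add_comm]

lemma prod_Icc_one {M : Type*} [CommMonoid M] (n : ℕ) (g : ℕ → M) :
    ∏ j ∈ Finset.Icc 1 n, g j = ∏ i : Fin n, g (i.1 + 1) := by
  rw [← Finset.Ico_add_one_right_eq_Icc, Finset.prod_Ico_eq_prod_range, Fin.prod_univ_eq_prod_range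
    (fun i => g (i + 1))]
  simp [add_comm]

section BellMain
variable {K : Type*} [Field K] [CharZero K]

lemma bell_main (f : ℕ → ℕ → K) (hf00 : f 0 0 = 0) (n k : ℕ) :
    (n.factorial : K) * coeff n ((phiSer f 0) ^ k)
      = (k.factorial : K) * bellPoly n k (fun s => f s 0) := by
  set b : ℕ → K := fun j => ((j.factorial : K))⁻¹ * f j 0 with hb
  set T : PowerSeries K := ∑ j ∈ Finset.Icc 1 n, PowerSeries.C (b j) * X ^ j with hT
  have hcoeff : ∀ i ≤ n, coeff i (phiSer f 0) = coeff i T := by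
    intro i hi
    rw [phiSer, coeff_mk, hT, map_sum]
    simp only [coeff_C_mul_X_pow]
    rw [Finset.sum_ite_eq (Finset.Icc 1 n) i b]
    by_cases hmem : i ∈ Finset.Icc 1 n
    · rw [if_pos hmem, hb]
    · rw [if_neg hmem]
      have : i = 0 := by rw [Finset.mem_Icc] at hmem; omega
      subst this
      simp [hf00]
  rw [coeff_pow_congr hcoeff k n le_rfl, hT,
    Finset.sum_pow_eq_sum_piAntidiag (Finset.Icc 1 n) _ k, map_sum]
  have hterm : ∀ r ∈ Finset.piAntidiag (Finset.Icc 1 n) k,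
      coeff n ((Nat.multinomial (Finset.Icc 1 n) r : PowerSeries K) *
          ∏ j ∈ Finset.Icc 1 n, (PowerSeries.C (b j) * X ^ j) ^ (r j))
        = if n = (∑ j ∈ Finset.Icc 1 n, j * r j) then
            (Nat.multinomial (Finset.Icc 1 n) r : K) * ∏ j ∈ Finset.Icc 1 n, (b j) ^ (r j)
          else 0 := by
    intro r _
    have hprod : ∏ j ∈ Finset.Icc 1 n, (PowerSeries.C (b j) * X ^ j) ^ (r j)
        = PowerSeries.C (∏ j ∈ Finset.Icc 1 n, (b j) ^ (r j)) *
            X ^ (∑ j ∈ Finset.Icc 1 n, j * r j) := by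
      simp only [mul_pow, ← pow_mul]
      rw [Finset.prod_mul_distrib]
      simp only [← map_pow]
      rw [← map_prod, Finset.prod_pow_eq_pow_sum]
    rw [hprod, ← mul_assoc, ← map_natCast (PowerSeries.C (R := K)), ← map_mul, coeff_C_mul_X_pow]
  rw [Finset.sum_congr rfl hterm, ← Finset.sum_filter, bellPoly, Finset.mul_sum,
    Finset.mul_sum]
  refine Finset.sum_bij' (fun (r : ℕ → ℕ) _ => fun i : Fin n => r (i.1 + 1))
    (fun (r' : Fin n → ℕ) _ => fun j : ℕ => if hj : 1 ≤ j ∧ j ≤ n then r' ⟨j - 1, by omega⟩ else 0)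
    ?_ ?_ ?_ ?_ ?_
  · -- forward membership
    intro r hr
    rw [Finset.mem_filter, Finset.mem_piAntidiag] at hr
    obtain ⟨⟨hsum, hsupp⟩, hdeg⟩ := hr
    rw [Finset.mem_filter, Fintype.mem_piFinset]
    refine ⟨fun i => ?_, ?_, ?_⟩
    · rw [Finset.mem_range]
      have h1 : (i.1 + 1) * r (i.1 + 1) ≤ ∑ j ∈ Finset.Icc 1 n, j * r j :=
        Finset.single_le_sum (f := fun j => j * r j) (fun _ _ => Nat.zero_le _)
          (Finset.mem_Icc.mpr ⟨by omega, i.isLt⟩)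
      have h2 : r (i.1 + 1) ≤ (i.1 + 1) * r (i.1 + 1) := Nat.le_mul_of_pos_left _ (by omega)
      omega
    · rw [← sum_Icc_one n r, hsum]
    · rw [← sum_Icc_one n (fun j => j * r j), ← hdeg]
  · -- backward membership
    intro r' hr'
    rw [Finset.mem_filter, Fintype.mem_piFinset] at hr'
    obtain ⟨hrange, hs1, hs2⟩ := hr'
    have hval : ∀ i : Fin n,
        (if hj : 1 ≤ i.1 + 1 ∧ i.1 + 1 ≤ n then r' ⟨i.1 + 1 - 1, by omega⟩ else 0) = r' i := by
      intro i
      rw [dif_pos ⟨by omega, i.isLt⟩]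
      congr 1
    rw [Finset.mem_filter, Finset.mem_piAntidiag]
    refine ⟨⟨?_, ?_⟩, ?_⟩
    · rw [sum_Icc_one n]
      rw [Finset.sum_congr rfl fun i _ => hval i, hs1]
    · intro j hj
      by_cases h : 1 ≤ j ∧ j ≤ n
      · exact Finset.mem_Icc.mpr h
      · exact absurd (dif_neg h) hj
    · rw [sum_Icc_one n]
      simp only [hval]
      omega
  · -- left inverse
    intro r hr
    dsimp only
    rw [Finset.mem_filter, Finset.mem_piAntidiag] at hr
    obtain ⟨⟨hsum, hsupp⟩, hdeg⟩ := hr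
    funext j
    by_cases h : 1 ≤ j ∧ j ≤ n
    · rw [dif_pos h]
      congr 1
      omega
    · rw [dif_neg h]
      rcases Nat.eq_zero_or_pos (r j) with h0 | h0
      · rw [h0]
      · exact absurd (Finset.mem_Icc.mp (hsupp j (by omega))) h
  · -- right inverse
    intro r' hr'
    dsimp only
    funext i
    rw [dif_pos ⟨by omega, i.isLt⟩]
    congr 1
  · -- value equality
    intro r hr
    dsimp only
    rw [Finset.mem_filter, Finset.mem_piAntidiag] at hr
    obtain ⟨⟨hsum, hsupp⟩, hdeg⟩ := hr
    have hmult : ((∏ j ∈ Finset.Icc 1 n, ((r j).factorial : ℕ)) *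
        Nat.multinomial (Finset.Icc 1 n) r : ℕ) = k.factorial := by
      rw [Nat.multinomial_spec, hsum]
    set P : K := ∏ i : Fin n, ((r (i.1 + 1)).factorial : K) with hP
    set Q : K := ∏ i : Fin n, (((i.1 + 1).factorial : K)) ^ (r (i.1 + 1)) with hQ
    set F : K := ∏ i : Fin n, (f (i.1 + 1) 0) ^ (r (i.1 + 1)) with hF
    have hPm : P * (Nat.multinomial (Finset.Icc 1 n) r : K) = (k.factorial : K) := by
      rw [hP, ← prod_Icc_one n (fun j => ((r j).factorial : K))]
      exact_mod_cast congrArg (Nat.cast : ℕ → K) hmult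
    have hbprod : ∏ j ∈ Finset.Icc 1 n, (b j) ^ (r j) = Q⁻¹ * F := by
      rw [hQ, hF, prod_Icc_one n (fun j => (b j) ^ (r j)), hb, ← Finset.prod_inv_distrib,
        ← Finset.prod_mul_distrib]
      exact Finset.prod_congr rfl fun i _ => by rw [mul_pow, inv_pow]
    have hcast : (algebraMap ℚ K) ((n.factorial : ℚ) /
        ∏ i : Fin n, (((r (i.1 + 1)).factorial : ℚ) * ((i.1 + 1).factorial : ℚ) ^ (r (i.1 + 1))))
        = (n.factorial : K) / (P * Q) := by
      rw [eq_ratCast (algebraMap ℚ K)]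
      push_cast
      rw [Finset.prod_mul_distrib, hP, hQ]
    have hP0 : P ≠ 0 := by
      rw [hP]
      exact Finset.prod_ne_zero_iff.mpr fun i _ =>
        Nat.cast_ne_zero.mpr (Nat.factorial_ne_zero _)
    have hQ0 : Q ≠ 0 := by
      rw [hQ]
      exact Finset.prod_ne_zero_iff.mpr fun i _ =>
        pow_ne_zero _ (Nat.cast_ne_zero.mpr (Nat.factorial_ne_zero _))
    rw [hbprod, hcast]
    have goal : (n.factorial : K) * (↑(Nat.multinomial (Finset.Icc 1 n) r) * (Q⁻¹ * F))
        = (k.factorial : K) * ((n.factorial : K) / (P * Q) * F) := by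
      field_simp
      linear_combination (n.factorial : K) * F * hPm
    exact goal

end BellMain

lemma substY_eq {K : Type*} [Field K] (f : ℕ → ℕ → K) (z : PowerSeries K) :
    substY (Fser f) z = phiSer f 0 + psEval (gSer f) z := by
  ext N
  have hF : ∀ m n : ℕ, MvPowerSeries.coeff (Finsupp.single 0 m + Finsupp.single 1 n) (Fser f)
      = ((m.factorial : K))⁻¹ * ((n.factorial : K))⁻¹ * f m n := by
    intro m n
    rw [MvPowerSeries.coeff_apply, Fser]
    have h0 : (Finsupp.single (0 : Fin 2) m + Finsupp.single (1 : Fin 2) n) 0 = m := by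
      rw [Finsupp.add_apply, Finsupp.single_eq_same, Finsupp.single_eq_of_ne (by decide),
        add_zero]
    have h1 : (Finsupp.single (0 : Fin 2) m + Finsupp.single (1 : Fin 2) n) 1 = n := by
      rw [Finsupp.add_apply, Finsupp.single_eq_of_ne (by decide), Finsupp.single_eq_same,
        zero_add]
    rw [h0, h1, mul_inv]
  rw [map_add, substY, coeff_mk]
  simp only [hF]
  rw [Finset.sum_comm, Finset.sum_range_succ']
  -- n = 0 part
  have hzero : ∑ m ∈ Finset.range (N + 1),
      ((m.factorial : K))⁻¹ * (((0 : ℕ).factorial : K))⁻¹ * f m 0 * coeff (N - m) (z ^ 0)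
      = coeff N (phiSer f 0) := by
    rw [phiSer, coeff_mk]
    rw [Finset.sum_eq_single_of_mem N (Finset.mem_range.2 (Nat.lt_succ_self N))]
    · simp
    · intro m hm hmN
      rw [Finset.mem_range] at hm
      rw [pow_zero, PowerSeries.coeff_one, if_neg (by omega), mul_zero]
  rw [hzero]
  -- psEval part
  rw [psEval, coeff_mk, Finset.sum_range_succ']
  have hg0 : coeff 0 (gSer f) = 0 := by
    rw [gSer, coeff_mk, if_pos rfl]
  rw [hg0, zero_mul, map_zero, add_zero]
  have hterm : ∀ i ∈ Finset.range N,
      coeff N (coeff (i + 1) (gSer f) * z ^ (i + 1))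
        = ∑ m ∈ Finset.range (N + 1),
            ((m.factorial : K))⁻¹ * (((i + 1).factorial : K))⁻¹ * f m (i + 1) *
              coeff (N - m) (z ^ (i + 1)) := by
    intro i _
    rw [gSer, coeff_mk, if_neg (by omega), mul_assoc, coeff_C_mul, coeff_mul,
      Finset.Nat.sum_antidiagonal_eq_sum_range_succ_mk, Finset.mul_sum]
    refine Finset.sum_congr rfl fun m _ => ?_
    rw [phiSer, coeff_mk]
    ring
  rw [Finset.sum_congr rfl hterm, add_comm]

theorem statement7 {K : Type*} [Field K] [CharZero K] (f : ℕ → ℕ → K)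
    (hf00 : f 0 0 = 0) (hf01 : f 0 1 ≠ 0)
    (gbar : PowerSeries (PowerSeries K))
    (hgbar0 : PowerSeries.constantCoeff gbar = 0)
    (hgbar1 : psComp (gSer f) gbar = PowerSeries.X)
    (hgbar2 : psComp gbar (gSer f) = PowerSeries.X)
    (y : PowerSeries K) (hy0 : PowerSeries.constantCoeff y = 0)
    (hy : substY (Fser f) y = 0)
    (m : ℕ) (hm : 1 ≤ m) :
    (m.factorial : K) * PowerSeries.coeff m y =
      ∑ n ∈ Finset.Icc 1 m, (m.choose n : K) *
        ∑ k ∈ Finset.Icc 1 n, (-1 : K) ^ k *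
          (((m - n).factorial : K) * ((k.factorial : K) *
            PowerSeries.coeff (m - n) (PowerSeries.coeff k gbar))) *
          bellPoly n k (fun s => f s 0) := by
  have hg0 : PowerSeries.coeff 0 (gSer f) = 0 := by
    rw [gSer, coeff_mk, if_pos rfl]
  have hgc : PowerSeries.constantCoeff (gSer f) = 0 := by
    rw [← coeff_zero_eq_constantCoeff_apply]; exact hg0
  have hphi0 : PowerSeries.constantCoeff (phiSer f 0) = 0 := by
    rw [← coeff_zero_eq_constantCoeff_apply, phiSer, coeff_mk]
    simp [hf00]
  set w : PowerSeries K := -(phiSer f 0) with hwdef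
  have hw : PowerSeries.constantCoeff w = 0 := by
    rw [hwdef, map_neg, hphi0, neg_zero]
  have hEy : psEval (gSer f) y = w := by
    have h := substY_eq f y
    rw [hy] at h
    rw [hwdef]
    exact eq_neg_of_add_eq_zero_right h.symm
  have hyw : y = psEval gbar w := by
    have h := psEval_psComp gbar (gSer f) hgc hy0
    rw [hgbar2, psEval_X hy0, hEy] at h
    exact h
  rw [hyw, coeff_psEval gbar hw (Nat.lt_succ_self m), Finset.mul_sum]
  have hsub : Finset.Icc 1 m ⊆ Finset.range (m + 1) := fun x hx => by
    rw [Finset.mem_Icc] at hx; rw [Finset.mem_range]; omega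
  rw [← Finset.sum_subset hsub (fun k hk hk' => ?_)]
  swap
  · -- vanishing at k = 0
    have hk0 : k = 0 := by
      rw [Finset.mem_range] at hk; rw [Finset.mem_Icc] at hk'; omega
    subst hk0
    rw [show PowerSeries.coeff 0 gbar = 0 by
      rw [coeff_zero_eq_constantCoeff_apply]; exact hgbar0]
    rw [zero_mul, map_zero, mul_zero]
  -- termwise expansion in n
  have hterm : ∀ k ∈ Finset.Icc 1 m,
      (m.factorial : K) * coeff m (PowerSeries.coeff k gbar * w ^ k)
        = ∑ n ∈ Finset.range (m + 1), (m.choose n : K) *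
            ((-1 : K) ^ k * (((m - n).factorial : K) * ((k.factorial : K) *
              PowerSeries.coeff (m - n) (PowerSeries.coeff k gbar))) *
              bellPoly n k (fun s => f s 0)) := by
    intro k hk
    rw [mul_comm (PowerSeries.coeff k gbar) (w ^ k), coeff_mul,
      Finset.Nat.sum_antidiagonal_eq_sum_range_succ_mk, Finset.mul_sum]
    refine Finset.sum_congr rfl fun n hn => ?_
    rw [Finset.mem_range] at hn
    have hnm : n ≤ m := by omega
    have hwk : coeff n (w ^ k) = (-1 : K) ^ k * coeff n ((phiSer f 0) ^ k) := by
      rw [hwdef, neg_pow, ← map_one (PowerSeries.C (R := K)), ← map_neg (PowerSeries.C (R := K)),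
        ← map_pow, coeff_C_mul]
    have hbell := bell_main f hf00 n k
    have hn0 : ((n.factorial : K)) ≠ 0 := Nat.cast_ne_zero.mpr (Nat.factorial_ne_zero n)
    have hphik : coeff n ((phiSer f 0) ^ k)
        = ((n.factorial : K))⁻¹ * ((k.factorial : K) * bellPoly n k (fun s => f s 0)) := by
      rw [← hbell, ← mul_assoc, inv_mul_cancel₀ hn0, one_mul]
    rw [hwk, hphik]
    have hch : (m.factorial : K)
        = (m.choose n : K) * (n.factorial : K) * ((m - n).factorial : K) := by
      exact_mod_cast (Nat.choose_mul_factorial_mul_factorial hnm).symm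
    rw [hch]
    field_simp
  rw [Finset.sum_congr rfl hterm, Finset.sum_comm]
  rw [← Finset.sum_subset hsub (fun n hn hn' => ?_)]
  swap
  · -- vanishing at n = 0
    have hn0 : n = 0 := by
      rw [Finset.mem_range] at hn; rw [Finset.mem_Icc] at hn'; omega
    subst hn0
    refine Finset.sum_eq_zero fun k hk => ?_
    rw [Finset.mem_Icc] at hk
    rw [bellPoly_eq_zero (by omega) (fun s => f s 0), mul_zero, mul_zero]
  refine Finset.sum_congr rfl fun n hn => ?_
  rw [Finset.mem_Icc] at hn
  rw [← Finset.mul_sum]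
  congr 1
  rw [← Finset.sum_subset (Finset.Icc_subset_Icc_right hn.2) (fun k hk hk' => ?_)]
  · -- vanishing for n < k ≤ m
    have hkn : n < k := by
      rw [Finset.mem_Icc] at hk hk'; omega
    rw [bellPoly_eq_zero hkn (fun s => f s 0), mul_zero]
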